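/- Every bounded function on [0,1]² measurable with respect to 𝒫([0,1]) ⊗ 𝒞, where 𝒫([0,1]) is the power set σ-algebra and 𝒞 the countable-cocountable σ-algebra, agrees with a function of the first variable alone for all values of the second variable outside a countable set. That is, every bounded 𝒫([0,1]) ⊗ 𝒞-measurable f : [0,1]² → ℝ satisfies: there exist g : [0,1] → ℝ and a countable A ⊆ [0,1] with f(x,y) = g(x) for all x and all y ∉ A. -/
import Mathlib


open MeasureTheory

private def GoodSet (s : Set (unitInterval × unitInterval)) : Prop :=
  ∃ A : Set unitInterval, A.Countable ∧ ∃ B : Set unitInterval,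
    ∀ x y, y ∉ A → ((x, y) ∈ s ↔ x ∈ B)

private def goodSigma : MeasurableSpace (unitInterval × unitInterval) where
  MeasurableSet' := GoodSet
  measurableSet_empty := ⟨∅, Set.countable_empty, ∅, fun _ _ _ => Iff.rfl⟩
  measurableSet_compl := by
    rintro s ⟨A, hA, B, hB⟩
    exact ⟨A, hA, Bᶜ, fun x y hy => by simp [hB x y hy]⟩
  measurableSet_iUnion := by
    intro s hs
    choose A hA B hB using hs
    refine ⟨⋃ n, A n, Set.countable_iUnion hA, ⋃ n, B n, fun x y hy => ?_⟩
    simp only [Set.mem_iUnion]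
    exact exists_congr fun n => hB n x y (fun h => hy (Set.mem_iUnion.2 ⟨n, h⟩))

theorem stmt_8
    (mC : MeasurableSpace unitInterval)
    (hmC : mC = MeasurableSpace.generateFrom {S | S.Countable ∨ Sᶜ.Countable})
    (f : unitInterval × unitInterval → ℝ)
    (hf : @Measurable _ _ (MeasurableSpace.prod ⊤ mC) _ f)
    (hbd : ∃ M : ℝ, ∀ p, |f p| ≤ M) :
    ∃ (g : unitInterval → ℝ) (A : Set unitInterval), A.Countable ∧
      ∀ x y, y ∉ A → f (x, y) = g x := by
  have hle : MeasurableSpace.prod ⊤ mC ≤ goodSigma := by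
    rw [MeasurableSpace.prod, sup_le_iff]
    constructor
    · rintro s ⟨a, -, rfl⟩
      exact ⟨∅, Set.countable_empty, a, fun x y _ => Iff.rfl⟩
    · rw [hmC, MeasurableSpace.comap_generateFrom]
      apply MeasurableSpace.generateFrom_le
      rintro t ⟨c, hc, rfl⟩
      rcases hc with hc | hc
      · exact ⟨c, hc, ∅, fun x y hy => by simp [Set.mem_preimage, hy]⟩
      · exact ⟨cᶜ, hc, Set.univ, fun x y hy => by
          simp [Set.mem_preimage, Set.notMem_compl_iff.1 hy]⟩
  -- sublevel sets
  have key : ∀ q : ℚ, GoodSet {p | f p < (q : ℝ)} := by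
    intro q
    exact hle _ (hf measurableSet_Iio)
  choose A hA B hB using key
  obtain ⟨y₀, hy₀⟩ : ∃ y₀, y₀ ∉ ⋃ q : ℚ, A q := by
    by_contra h
    push_neg at h
    have hcu : (Set.univ : Set unitInterval).Countable :=
      (Set.countable_iUnion hA).mono fun y _ => h y
    have hc : Countable unitInterval := Set.countable_univ_iff.1 hcu
    have h1 : (Cardinal.mk unitInterval) ≤ Cardinal.aleph0 :=
      Cardinal.mk_le_aleph0_iff.2 hc
    have h2 : (Cardinal.mk unitInterval) = Cardinal.continuum :=
      Cardinal.mk_Icc_real zero_lt_one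
    rw [h2] at h1
    exact absurd h1 (not_le.2 Cardinal.aleph0_lt_continuum)
  refine ⟨fun x => f (x, y₀), ⋃ q : ℚ, A q, Set.countable_iUnion hA, fun x y hy => ?_⟩
  have hiff : ∀ q : ℚ, f (x, y) < (q : ℝ) ↔ f (x, y₀) < (q : ℝ) := fun q =>
    (hB q x y fun h => hy (Set.mem_iUnion.2 ⟨q, h⟩)).trans
      (hB q x y₀ fun h => hy₀ (Set.mem_iUnion.2 ⟨q, h⟩)).symm
  by_contra hne
  rcases lt_or_gt_of_ne hne with hlt | hlt
  · obtain ⟨q, hq1, hq2⟩ := exists_rat_btwn hlt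
    exact absurd ((hiff q).1 hq1) (not_lt.2 hq2.le)
  · obtain ⟨q, hq1, hq2⟩ := exists_rat_btwn hlt
    exact absurd ((hiff q).2 hq1) (not_lt.2 hq2.le)
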